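/- Let a, b be distinct relatively prime integers greater than 1 and let S = {ai + bj : i, j ∈ ℕ}. Then as formal power series over ℚ, Σ_{n ∈ S} q^n = 1/(1-q) - f_A(q), and moreover 1/((1-q^a)(1-q^b)) = 1/(1-q) - f_A(q) + q^{ab}/((1-q^a)(1-q^b)), where f_A(q) = Σ_{n ∉ S} q^n. -/

import Mathlib

open PowerSeries
open scoped Classical

private lemma aux_one_sub_X_inv : (1 - (X : ℚ⟦X⟧))⁻¹ = PowerSeries.mk fun _ => (1 : ℚ) := by
  rw [PowerSeries.inv_eq_iff_mul_eq_one (by simp)]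
  ext n
  rw [mul_sub, mul_one, map_sub]
  cases n with
  | zero => simp
  | succ m => simp [PowerSeries.coeff_succ_mul_X, PowerSeries.coeff_mk]

private lemma aux_small {a b n : ℕ} (ha : 1 ≤ a) (hn : n < b) :
    (∃ i j : ℕ, n = a * i + b * j) ↔ ∃ i, i < b ∧ n = a * i := by
  constructor
  · rintro ⟨i, j, rfl⟩
    have hj : j = 0 := by
      rcases Nat.eq_zero_or_pos j with h0 | h0
      · exact h0
      · exfalso
        have := Nat.le_mul_of_pos_right b h0
        omega
    subst hj
    have hia : i ≤ a * i := Nat.le_mul_of_pos_left i (by omega)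
    exact ⟨i, by omega, by ring⟩
  · rintro ⟨i, _, rfl⟩
    exact ⟨i, 0, by ring⟩

private lemma aux_shift {a b n : ℕ} (hn : b ≤ n)
    (h : ∃ i j : ℕ, n - b = a * i + b * j) : ∃ i j : ℕ, n = a * i + b * j := by
  obtain ⟨i, j, h⟩ := h
  exact ⟨i, j + 1, by rw [Nat.mul_add, Nat.mul_one]; omega⟩

private lemma aux_C {a b n : ℕ} (ha : 1 ≤ a) (hb : 1 ≤ b) (hn : b ≤ n)
    (h : ∃ i j : ℕ, n = a * i + b * j) (h2 : ¬ ∃ i j : ℕ, n - b = a * i + b * j) :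
    ∃ i, i < b ∧ n = a * i := by
  obtain ⟨i, j, rfl⟩ := h
  have hj : j = 0 := by
    cases j with
    | zero => rfl
    | succ k =>
      exfalso
      exact h2 ⟨i, k, by rw [Nat.mul_succ] at *; omega⟩
  subst hj
  refine ⟨i, ?_, by ring⟩
  by_contra hib
  push_neg at hib
  refine h2 ⟨i - b, a - 1, ?_⟩
  have e1 : a * (i - b) + a * b = a * i := by
    rw [← Nat.mul_add]; congr 1; omega
  have e2 : b * (a - 1) + b * 1 = b * a := by
    rw [← Nat.mul_add]; congr 1; omega
  have e3 : a * b = b * a := Nat.mul_comm a b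
  omega

private lemma aux_B {a b n : ℕ} (ha : 1 ≤ a) (hcop : Nat.Coprime a b)
    (hn : b ≤ n) (h2 : ∃ i j : ℕ, n - b = a * i + b * j) :
    ¬ ∃ i, i < b ∧ n = a * i := by
  rintro ⟨i, hib, rfl⟩
  obtain ⟨i', j', hij⟩ := h2
  have hb1 : 1 ≤ b := by
    rcases Nat.eq_zero_or_pos b with h0 | h0
    · omega
    · exact h0
  have key : a * i = a * i' + b * j' + b := by omega
  have hlt : i' < i := by
    have h5 : a * i' < a * i := by omega
    exact Nat.lt_of_mul_lt_mul_left h5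
  have h3 : a * (i - i') + a * i' = a * i := by
    rw [← Nat.mul_add]; congr 1; omega
  have h4 : a * (i - i') = b * (j' + 1) := by
    rw [Nat.mul_add, Nat.mul_one]; omega
  have hdvd : b ∣ a * (i - i') := ⟨j' + 1, h4⟩
  have hd2 : b ∣ i - i' := Nat.Coprime.dvd_of_dvd_mul_left hcop.symm hdvd
  have : b ≤ i - i' := Nat.le_of_dvd (by omega) hd2
  omega

private lemma aux_sum_coeff {a b n : ℕ} (ha : 1 ≤ a) :
    (∑ i ∈ Finset.range b, (if n = a * i then (1 : ℚ) else 0)) =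
      if ∃ i, i < b ∧ n = a * i then 1 else 0 := by
  by_cases h : ∃ i, i < b ∧ n = a * i
  · obtain ⟨i0, hi0, rfl⟩ := h
    rw [if_pos ⟨i0, hi0, rfl⟩]
    rw [Finset.sum_eq_single i0]
    · simp
    · intro j hj hne
      rw [if_neg]
      intro hc
      exact hne ((Nat.eq_of_mul_eq_mul_left (by omega) hc).symm)
    · intro hc
      exact absurd (Finset.mem_range.mpr hi0) hc
  · rw [if_neg h]
    push_neg at h
    refine Finset.sum_eq_zero fun i hi => ?_
    rw [if_neg (h i (Finset.mem_range.mp hi))]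

private lemma aux_key (a b : ℕ) (ha : 1 ≤ a) (hb : 1 ≤ b) (hcop : Nat.Coprime a b) :
    (PowerSeries.mk fun n => if ∃ i j : ℕ, n = a * i + b * j then (1 : ℚ) else 0) *
      (1 - (X : ℚ⟦X⟧) ^ b) = ∑ i ∈ Finset.range b, (X : ℚ⟦X⟧) ^ (a * i) := by
  ext n
  rw [mul_sub, mul_one, map_sub, PowerSeries.coeff_mul_X_pow', PowerSeries.coeff_mk]
  rw [map_sum]
  have hsum : ∀ i, (PowerSeries.coeff n) ((X : ℚ⟦X⟧) ^ (a * i)) =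
      if n = a * i then (1 : ℚ) else 0 := fun i => by
    rw [PowerSeries.coeff_X_pow]
  simp_rw [hsum]
  rw [aux_sum_coeff ha]
  by_cases hbn : b ≤ n
  · rw [if_pos hbn, PowerSeries.coeff_mk]
    by_cases h2 : ∃ i j : ℕ, n - b = a * i + b * j
    · rw [if_pos h2, if_pos (aux_shift hbn h2), if_neg (aux_B ha hcop hbn h2)]
      ring
    · rw [if_neg h2]
      by_cases h1 : ∃ i j : ℕ, n = a * i + b * j
      · rw [if_pos h1, if_pos (aux_C ha hb hbn h1 h2)]
        ring
      · rw [if_neg h1, if_neg]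
        · ring
        · rintro ⟨i, hib, rfl⟩
          exact h1 ⟨i, 0, by ring⟩
  · rw [if_neg hbn]
    have := aux_small (a := a) (b := b) (n := n) ha (by omega)
    by_cases h1 : ∃ i j : ℕ, n = a * i + b * j
    · rw [if_pos h1, if_pos (this.mp h1)]; ring
    · rw [if_neg h1, if_neg (fun hc => h1 (this.mpr hc))]; ring

private lemma aux_main (a b : ℕ) (ha : 1 ≤ a) (hb : 1 ≤ b) (hcop : Nat.Coprime a b) :
    (PowerSeries.mk fun n => if ∃ i j : ℕ, n = a * i + b * j then (1 : ℚ) else 0) *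
      ((1 - (X : ℚ⟦X⟧) ^ a) * (1 - X ^ b)) = 1 - (X : ℚ⟦X⟧) ^ (a * b) := by
  calc (PowerSeries.mk fun n => if ∃ i j : ℕ, n = a * i + b * j then (1 : ℚ) else 0) *
      ((1 - (X : ℚ⟦X⟧) ^ a) * (1 - X ^ b))
      = ((PowerSeries.mk fun n => if ∃ i j : ℕ, n = a * i + b * j then (1 : ℚ) else 0) *
        (1 - X ^ b)) * (1 - (X : ℚ⟦X⟧) ^ a) := by ring
    _ = (∑ i ∈ Finset.range b, (X : ℚ⟦X⟧) ^ (a * i)) * (1 - X ^ a) := by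
        rw [aux_key a b ha hb hcop]
    _ = (∑ i ∈ Finset.range b, ((X : ℚ⟦X⟧) ^ a) ^ i) * (1 - X ^ a) := by
        simp_rw [← pow_mul]
    _ = 1 - ((X : ℚ⟦X⟧) ^ a) ^ b := geom_sum_mul_neg _ _
    _ = 1 - (X : ℚ⟦X⟧) ^ (a * b) := by rw [← pow_mul]

theorem stmt_18 (a b : ℕ) (ha : 2 ≤ a) (hb : 2 ≤ b) (hab : a ≠ b) (hcop : Nat.Coprime a b) :
    (PowerSeries.mk fun n => if ∃ i j : ℕ, n = a * i + b * j then (1 : ℚ) else 0) =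
        (1 - (X : ℚ⟦X⟧))⁻¹ -
          (PowerSeries.mk fun n => if ∃ i j : ℕ, n = a * i + b * j then (0 : ℚ) else 1) ∧
      ((1 - (X : ℚ⟦X⟧) ^ a) * (1 - X ^ b))⁻¹ =
        (1 - (X : ℚ⟦X⟧))⁻¹ -
            (PowerSeries.mk fun n => if ∃ i j : ℕ, n = a * i + b * j then (0 : ℚ) else 1) +
          X ^ (a * b) * ((1 - (X : ℚ⟦X⟧) ^ a) * (1 - X ^ b))⁻¹ := by
  have ha1 : 1 ≤ a := by omega
  have hb1 : 1 ≤ b := by omega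
  have hpart1 : (PowerSeries.mk fun n => if ∃ i j : ℕ, n = a * i + b * j then (1 : ℚ) else 0) =
      (1 - (X : ℚ⟦X⟧))⁻¹ -
        (PowerSeries.mk fun n => if ∃ i j : ℕ, n = a * i + b * j then (0 : ℚ) else 1) := by
    rw [aux_one_sub_X_inv]
    ext n
    rw [map_sub, PowerSeries.coeff_mk, PowerSeries.coeff_mk, PowerSeries.coeff_mk]
    split_ifs <;> ring
  refine ⟨hpart1, ?_⟩
  set u : ℚ⟦X⟧ := (1 - (X : ℚ⟦X⟧) ^ a) * (1 - X ^ b) with hu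
  have hcu : PowerSeries.constantCoeff u ≠ 0 := by
    rw [hu]
    simp [PowerSeries.constantCoeff_X, zero_pow (by omega : a ≠ 0), zero_pow (by omega : b ≠ 0)]
  have huu : u * u⁻¹ = 1 := PowerSeries.mul_inv_cancel u hcu
  have hkey := aux_main a b ha1 hb1 hcop
  rw [← hpart1]
  have : (1 - (X : ℚ⟦X⟧) ^ (a * b)) * u⁻¹ =
      (PowerSeries.mk fun n => if ∃ i j : ℕ, n = a * i + b * j then (1 : ℚ) else 0) := by
    rw [← hkey, mul_assoc, huu, mul_one]
  linear_combination this
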